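/- Let q_l = 1/(1 + e^{2^{l-η}}) for real η and integer l. Then for l ≤ η, the binary entropy satisfies H(q_l) > 1 - log₂(e) · 2^{l - η}. -/

import Mathlib

noncomputable def binH (p : ℝ) : ℝ :=
  -(p * Real.logb 2 p) - (1 - p) * Real.logb 2 (1 - p)

theorem stmt_7 (η : ℝ) (l : ℤ) (hl : (l : ℝ) ≤ η) :
    binH (1 / (1 + Real.exp ((2 : ℝ) ^ ((l : ℝ) - η)))) >
      1 - Real.logb 2 (Real.exp 1) * (2 : ℝ) ^ ((l : ℝ) - η) := by
  set t : ℝ := (2 : ℝ) ^ ((l : ℝ) - η) with ht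
  have ht0 : 0 < t := Real.rpow_pos_of_pos (by norm_num) _
  set E := Real.exp t with hE
  have hE1 : 1 < E := by nlinarith [Real.add_one_le_exp t]
  have hE0 : (0:ℝ) < 1 + E := by linarith
  have hlog2 : 0 < Real.log 2 := Real.log_pos (by norm_num)
  have h1q : 1 - 1 / (1 + E) = E / (1 + E) := by field_simp; ring
  have hbin : binH (1 / (1 + E)) =
      (Real.log (1 + E) - (E / (1 + E)) * t) / Real.log 2 := by
    unfold binH
    rw [h1q, Real.logb, Real.logb,
      Real.log_div one_ne_zero hE0.ne', Real.log_div (by linarith) hE0.ne',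
      hE, Real.log_exp, Real.log_one]
    field_simp
    ring
  have hrhs : 1 - Real.logb 2 (Real.exp 1) * t = (Real.log 2 - t) / Real.log 2 := by
    rw [Real.logb, Real.log_exp]
    field_simp
  rw [hbin, hrhs, gt_iff_lt, div_lt_div_iff_of_pos_right hlog2]
  have hlog : Real.log 2 < Real.log (1 + E) := Real.log_lt_log (by norm_num) (by linarith)
  have hfrac : t - (E / (1 + E)) * t = t / (1 + E) := by field_simp; ring
  nlinarith [div_pos ht0 hE0]
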